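/- Let (Tₙ)_{n∈ℕ} be a partition of ℕ into pairwise disjoint infinite sets and let A₂ = ⋃_{m∈ℕ} ⋂_{n≥m} π_{Tₙ}⁻¹(B₁ⁿ), where B₁ⁿ is the set of z ∈ ℓ∞(Tₙ) that are not eventually zero. Then A₂ cannot be written as a countable intersection of Fσ subsets of ℓ∞ (i.e. A₂ does not belong to the second multiplicative Borel class). -/

import Mathlib

open BoundedContinuousFunction

/-- The coordinate projection `π_N : ℓ∞ → ℓ∞(N)`, restriction of a bounded sequence
to the coordinates in `N`. -/
def proj (N : Set ℕ) (x : ℕ →ᵇ ℝ) : ↥N →ᵇ ℝ :=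
  x.compContinuous ⟨fun k => (k : ℕ), continuous_subtype_val⟩

/-- A subset of ℓ∞ is Fσ if it is a countable union of closed sets. -/
def IsFσ (F : Set (ℕ →ᵇ ℝ)) : Prop :=
  ∃ C : ℕ → Set (ℕ →ᵇ ℝ), (∀ m, IsClosed (C m)) ∧ F = ⋃ m, C m

namespace A2aux
noncomputable section

def r (i : ℕ) : ℝ := (1/2 : ℝ) ^ i

lemma r_pos (i : ℕ) : 0 < r i := pow_pos (by norm_num) i

lemma r_le_one (i : ℕ) : r i ≤ 1 := pow_le_one₀ (by norm_num) (by norm_num)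

lemma r_anti : ∀ {i j : ℕ}, i ≤ j → r j ≤ r i := fun h =>
  pow_le_pow_of_le_one (by norm_num) (by norm_num) h

lemma r_tendsto : Filter.Tendsto r Filter.atTop (nhds 0) :=
  tendsto_pow_atTop_nhds_zero_of_lt_one (by norm_num) (by norm_num)

lemma exists_r_lt {ε : ℝ} (hε : 0 < ε) (j : ℕ) : ∃ i, j ≤ i ∧ r i < ε := by
  obtain ⟨i₀, hi₀⟩ := (Filter.tendsto_atTop'.1 r_tendsto (Set.Iio ε)
    (Iio_mem_nhds (by simpa using hε)))
  exact ⟨max j i₀, le_max_left _ _, hi₀ _ (le_max_right _ _)⟩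

lemma dist_le_of_mem01 {a b : ℝ} {i : ℕ} (ha : a = 0 ∨ a = r i) (hb : b = 0 ∨ b = r i) :
    dist a b ≤ r i := by
  rcases ha with ha | ha <;> rcases hb with hb | hb <;>
    simp [ha, hb, Real.dist_eq, abs_of_nonneg (r_pos i).le] <;>
    linarith [r_pos i]

variable (E : ℕ → ℕ → ℕ)

/-- the basic closed cylinder sets for the fusion argument -/
def Vset (D : Finset ℕ) (c : ℕ → ℕ → ℝ) (l : ℕ) : Set (ℕ →ᵇ ℝ) :=
  {x | (∀ n i, x (E n i) = 0 ∨ x (E n i) = r i) ∧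
       (∀ k, (∀ n i, E n i ≠ k) → x k = 0) ∧
       (∀ n ∈ D, ∀ i, x (E n i) = c n i) ∧
       (∀ n i, i < l → x (E n i) = c n i)}

lemma isClosed_Vset (D : Finset ℕ) (c : ℕ → ℕ → ℝ) (l : ℕ) :
    IsClosed (Vset E D c l) := by
  have h1 : Vset E D c l =
      (⋂ (n : ℕ) (i : ℕ), {x : ℕ →ᵇ ℝ | x (E n i) ∈ ({0, r i} : Set ℝ)}) ∩
      ((⋂ (k : ℕ) (_ : ∀ n i, E n i ≠ k), {x : ℕ →ᵇ ℝ | x k ∈ ({0} : Set ℝ)}) ∩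
      ((⋂ (n : ℕ) (_ : n ∈ D) (i : ℕ), {x : ℕ →ᵇ ℝ | x (E n i) ∈ ({c n i} : Set ℝ)}) ∩
      (⋂ (n : ℕ) (i : ℕ) (_ : i < l), {x : ℕ →ᵇ ℝ | x (E n i) ∈ ({c n i} : Set ℝ)}))) := by
    ext x
    simp only [Vset, Set.mem_setOf_eq, Set.mem_inter_iff, Set.mem_iInter,
      Set.mem_insert_iff, Set.mem_singleton_iff]
  rw [h1]
  have hev : ∀ (k : ℕ) (s : Set ℝ), IsClosed s → IsClosed {x : ℕ →ᵇ ℝ | x k ∈ s} :=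
    fun k s hs => hs.preimage (continuous_eval_const _)
  refine IsClosed.inter ?_ (IsClosed.inter ?_ (IsClosed.inter ?_ ?_))
  · exact isClosed_iInter fun n => isClosed_iInter fun i =>
      hev _ _ ((Set.toFinite ({0, r _} : Set ℝ)).isClosed)
  · exact isClosed_iInter fun k => isClosed_iInter fun _ => hev _ _ isClosed_singleton
  · exact isClosed_iInter fun n => isClosed_iInter fun _ => isClosed_iInter fun i =>
      hev _ _ isClosed_singleton
  · exact isClosed_iInter fun n => isClosed_iInter fun i => isClosed_iInter fun _ =>
      hev _ _ isClosed_singleton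

/-- the invariant maintained through the fusion -/
def Good (D : Finset ℕ) (c : ℕ → ℕ → ℝ) (l : ℕ) : Prop :=
  (∀ n i, c n i = 0 ∨ c n i = r i) ∧ (∀ n ∈ D, ∀ i, l ≤ i → c n i = 0)

variable (hEinj : Function.Injective fun p : ℕ × ℕ => E p.1 p.2)

open Classical in
/-- the canonical point of a cylinder -/
def canon (c : ℕ → ℕ → ℝ) (hc : ∀ n i, c n i = 0 ∨ c n i = r i) : ℕ →ᵇ ℝ :=
  BoundedContinuousFunction.ofNormedAddCommGroupDiscrete
    (fun k => if h : ∃ p : ℕ × ℕ, E p.1 p.2 = k then c h.choose.1 h.choose.2 else 0) 1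
    (by
      intro k
      split
      · rcases hc _ _ with h | h <;> rw [h] <;>
          simp [Real.norm_eq_abs, abs_of_nonneg (r_pos _).le, r_le_one]
      · simp)

include hEinj in
lemma canon_apply_mem (c : ℕ → ℕ → ℝ) (hc : ∀ n i, c n i = 0 ∨ c n i = r i) (n i : ℕ) :
    canon E c hc (E n i) = c n i := by
  classical
  have hex : ∃ p : ℕ × ℕ, E p.1 p.2 = E n i := ⟨(n, i), rfl⟩
  have : hex.choose = (n, i) := hEinj hex.choose_spec
  simp only [canon, BoundedContinuousFunction.coe_ofNormedAddCommGroupDiscrete, dif_pos hex]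
  rw [this]

lemma canon_apply_not_mem (c : ℕ → ℕ → ℝ) (hc : ∀ n i, c n i = 0 ∨ c n i = r i) (k : ℕ)
    (hk : ∀ n i, E n i ≠ k) : canon E c hc k = 0 := by
  classical
  have hex : ¬ ∃ p : ℕ × ℕ, E p.1 p.2 = k := by
    rintro ⟨p, hp⟩; exact hk p.1 p.2 hp
  simp only [canon, BoundedContinuousFunction.coe_ofNormedAddCommGroupDiscrete, dif_neg hex]

include hEinj in
lemma canon_mem_Vset (D : Finset ℕ) (c : ℕ → ℕ → ℝ) (l : ℕ)
    (hc : ∀ n i, c n i = 0 ∨ c n i = r i) :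
    canon E c hc ∈ Vset E D c l := by
  refine ⟨fun n i => ?_, fun k hk => canon_apply_not_mem E c hc k hk,
    fun n _ i => canon_apply_mem E hEinj c hc n i,
    fun n i _ => canon_apply_mem E hEinj c hc n i⟩
  rw [canon_apply_mem E hEinj c hc n i]; exact hc n i

include hEinj in
lemma Vset_nonempty (D : Finset ℕ) (c : ℕ → ℕ → ℝ) (l : ℕ)
    (hc : ∀ n i, c n i = 0 ∨ c n i = r i) : (Vset E D c l).Nonempty :=
  ⟨canon E c hc, canon_mem_Vset E hEinj D c l hc⟩

/-- any two points of a cylinder are `r l`-close -/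
lemma dist_le_of_mem_Vset {D : Finset ℕ} {c : ℕ → ℕ → ℝ} {l : ℕ} {x y : ℕ →ᵇ ℝ}
    (hx : x ∈ Vset E D c l) (hy : y ∈ Vset E D c l) : dist x y ≤ r l := by
  obtain ⟨hx1, hx2, hx3, hx4⟩ := hx
  obtain ⟨hy1, hy2, hy3, hy4⟩ := hy
  rw [BoundedContinuousFunction.dist_le (r_pos l).le]
  intro k
  by_cases hk : ∃ p : ℕ × ℕ, E p.1 p.2 = k
  · obtain ⟨⟨n, i⟩, rfl⟩ := hk
    by_cases hi : i < l
    · rw [hx4 n i hi, hy4 n i hi]; simp [(r_pos l).le]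
    · exact le_trans (dist_le_of_mem01 (hx1 n i) (hy1 n i)) (r_anti (not_lt.1 hi))
  · push_neg at hk
    have hk' : ∀ n i, E n i ≠ k := fun n i => hk (n, i)
    rw [hx2 k hk', hy2 k hk']; simp [(r_pos l).le]

/-- ℓ∞ coordinate update -/
def upd (x : ℕ →ᵇ ℝ) (k0 : ℕ) (v : ℝ) : ℕ →ᵇ ℝ :=
  BoundedContinuousFunction.ofNormedAddCommGroupDiscrete (Function.update x k0 v)
    (‖x‖ + ‖v‖) (by
      intro k
      rcases eq_or_ne k k0 with rfl | hk
      · simpa [Function.update_self] using le_add_of_nonneg_left (α := ℝ) (norm_nonneg x)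
      · rw [Function.update_of_ne hk]
        exact le_trans (x.norm_coe_le_norm k) (le_add_of_nonneg_right (norm_nonneg v)))

lemma upd_same (x : ℕ →ᵇ ℝ) (k0 : ℕ) (v : ℝ) : upd x k0 v k0 = v := by
  simp [upd, Function.update_self]

lemma upd_noteq (x : ℕ →ᵇ ℝ) (k0 : ℕ) (v : ℝ) {k : ℕ} (h : k ≠ k0) : upd x k0 v k = x k := by
  simp [upd, Function.update_of_ne h]

include hEinj in
/-- the density step: inside any cylinder, one can make a non-frozen row nonzero
arbitrarily far out, by an arbitrarily small perturbation -/
lemma dense_update {D : Finset ℕ} {c : ℕ → ℕ → ℝ} {l : ℕ} (x : ℕ →ᵇ ℝ)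
    (hx : x ∈ Vset E D c l) {n : ℕ} (hn : n ∉ D) (j : ℕ) {ε : ℝ} (hε : 0 < ε) :
    ∃ y ∈ Vset E D c l, dist y x < ε ∧ ∃ i, j ≤ i ∧ y (E n i) ≠ 0 := by
  obtain ⟨hx1, hx2, hx3, hx4⟩ := hx
  obtain ⟨i, hi, hri⟩ := exists_r_lt hε (max j l)
  set y := upd x (E n i) (r i) with hy
  have hpair : ∀ n' i', E n' i' = E n i → n' = n ∧ i' = i := by
    intro n' i' h
    have := hEinj (a₁ := (n', i')) (a₂ := (n, i)) h
    exact ⟨congrArg Prod.fst this, congrArg Prod.snd this⟩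
  refine ⟨y, ⟨?_, ?_, ?_, ?_⟩, ?_, i, le_trans (le_max_left _ _) hi, ?_⟩
  · intro n' i'
    rcases eq_or_ne (E n' i') (E n i) with h | h
    · obtain ⟨rfl, rfl⟩ := hpair n' i' h
      rw [upd_same]; exact Or.inr rfl
    · rw [upd_noteq _ _ _ h]; exact hx1 n' i'
  · intro k hk
    rw [upd_noteq _ _ _ (Ne.symm (hk n i))]; exact hx2 k hk
  · intro n' hn' i'
    rcases eq_or_ne (E n' i') (E n i) with h | h
    · obtain ⟨rfl, rfl⟩ := hpair n' i' h; exact absurd hn' hn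
    · rw [upd_noteq _ _ _ h]; exact hx3 n' hn' i'
  · intro n' i' hi'
    rcases eq_or_ne (E n' i') (E n i) with h | h
    · obtain ⟨rfl, rfl⟩ := hpair n' i' h
      exact absurd (lt_of_lt_of_le hi' (le_trans (le_max_right _ _) hi)) (lt_irrefl _)
    · rw [upd_noteq _ _ _ h]; exact hx4 n' i' hi'
  · refine lt_of_le_of_lt ?_ hri
    rw [BoundedContinuousFunction.dist_le (r_pos i).le]
    intro k
    rcases eq_or_ne k (E n i) with rfl | h
    · rw [upd_same]
      exact dist_le_of_mem01 (Or.inr rfl) (hx1 n i)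
    · rw [upd_noteq _ _ _ h]; simp [(r_pos i).le]
  · rw [upd_same]; exact ne_of_gt (r_pos i)

variable (T : ℕ → Set ℕ) (hET : ∀ n i, E n i ∈ T n)
  (hTdisj : ∀ i j, i ≠ j → Disjoint (T i) (T j))

/-- the set A₂ -/
def A2 : Set (ℕ →ᵇ ℝ) :=
  ⋃ m : ℕ, ⋂ n ≥ m,
    proj (T n) ⁻¹' {z : ↥(T n) →ᵇ ℝ | ¬ {k : ↥(T n) | z k ≠ 0}.Finite}

include hEinj hET in
lemma mem_A2 {D : Finset ℕ} {c : ℕ → ℕ → ℝ} {l : ℕ} {x : ℕ →ᵇ ℝ}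
    (hx : x ∈ Vset E D c l) (h : ∀ n, n ∉ D → {i | x (E n i) ≠ 0}.Infinite) :
    x ∈ A2 T := by
  refine Set.mem_iUnion.2 ⟨D.sup id + 1, ?_⟩
  refine Set.mem_iInter.2 fun n => Set.mem_iInter.2 fun hn => ?_
  have hnD : n ∉ D := by
    intro hmem
    have := Finset.le_sup (f := id) hmem
    simp only [id_eq] at this
    omega
  intro hfin
  apply h n hnD
  have hsub : {i | x (E n i) ≠ 0} ⊆
      (fun i => (⟨E n i, hET n i⟩ : ↥(T n))) ⁻¹' {k : ↥(T n) | proj (T n) x k ≠ 0} := by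
    intro i hi
    exact hi
  have hinj : Set.InjOn (fun i => (⟨E n i, hET n i⟩ : ↥(T n)))
      ((fun i => (⟨E n i, hET n i⟩ : ↥(T n))) ⁻¹' {k : ↥(T n) | proj (T n) x k ≠ 0}) := by
    intro a _ b _ hab
    have : E n a = E n b := congrArg Subtype.val hab
    have := hEinj (a₁ := (n, a)) (a₂ := (n, b)) this
    exact congrArg Prod.snd this
  exact (hfin.preimage hinj).subset hsub

include hET hTdisj in
lemma row_finite {D : Finset ℕ} {c : ℕ → ℕ → ℝ} {l : ℕ} {x : ℕ →ᵇ ℝ}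
    (hx : x ∈ Vset E D c l) (n : ℕ) (hfin : {i | x (E n i) ≠ 0}.Finite) :
    {k : ↥(T n) | proj (T n) x k ≠ 0}.Finite := by
  obtain ⟨hx1, hx2, hx3, hx4⟩ := hx
  refine (hfin.image (fun i => (⟨E n i, hET n i⟩ : ↥(T n)))).subset ?_
  rintro ⟨k, hkT⟩ hk
  have hxk : x k ≠ 0 := hk
  have hex : ∃ p : ℕ × ℕ, E p.1 p.2 = k := by
    by_contra hc
    push_neg at hc
    exact hxk (hx2 k (fun n' i' => hc (n', i')))
  obtain ⟨⟨n', i'⟩, hp⟩ := hex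
  have hn' : n' = n := by
    by_contra hne
    exact Set.disjoint_left.1 (hTdisj n' n hne) (hp ▸ hET n' i') hkT
  subst hn'
  exact ⟨i', by simpa [hp] using hxk, by simp [hp]⟩

/-- in a nonempty Baire space, a residual countable union of closed sets has a member
with nonempty interior -/
lemma exists_interior_nonempty {X : Type*} [TopologicalSpace X] [BaireSpace X] [Nonempty X]
    (C : ℕ → Set X) (hC : ∀ j, IsClosed (C j)) (h : (⋃ j, C j) ∈ residual X) :
    ∃ j, (interior (C j)).Nonempty := by
  by_contra h'
  push_neg at h'
  have hint : ∀ j, interior (C j) = ∅ := h'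
  have hres : ∀ j, (C j)ᶜ ∈ residual X := fun j =>
    residual_of_dense_open (hC j).isOpen_compl (by
      rw [← interior_eq_empty_iff_dense_compl]; exact hint j)
  have h2 : (⋂ j, (C j)ᶜ) ∈ residual X := countable_iInter_mem.2 hres
  have h3 := Filter.inter_mem h h2
  have hempty : (⋃ j, C j) ∩ ⋂ j, (C j)ᶜ = ∅ := by
    rw [← Set.compl_iUnion]
    exact Set.inter_compl_self _
  rw [hempty] at h3
  exact Set.not_nonempty_empty (dense_of_mem_residual h3).nonempty

include hEinj hET in
/-- any superset of `A₂` is residual in every cylinder -/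
lemma superset_residual {D : Finset ℕ} {c : ℕ → ℕ → ℝ} {l : ℕ}
    (F : Set (ℕ →ᵇ ℝ)) (hAF : A2 T ⊆ F) :
    Subtype.val ⁻¹' F ∈ residual ↥(Vset E D c l) := by
  set V := Vset E D c l with hV
  set S : ℕ × ℕ → Set ↥V := fun p =>
    if p.1 ∈ D then Set.univ
    else Subtype.val ⁻¹' (⋃ i, ⋃ (_ : p.2 ≤ i), {x : ℕ →ᵇ ℝ | x (E p.1 i) ≠ 0}) with hS
  have hmem : ∀ p : ℕ × ℕ, S p ∈ residual ↥V := by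
    rintro ⟨n, j⟩
    by_cases hn : n ∈ D
    · simp only [hS, if_pos hn]; exact Filter.univ_mem
    · simp only [hS, if_neg hn]
      refine residual_of_dense_open ?_ ?_
      · refine IsOpen.preimage continuous_subtype_val ?_
        refine isOpen_iUnion fun i => isOpen_iUnion fun _ => ?_
        have : {x : ℕ →ᵇ ℝ | x (E n i) ≠ 0} = (fun x : ℕ →ᵇ ℝ => x (E n i)) ⁻¹' {(0:ℝ)}ᶜ := rfl
        rw [this]
        exact (isClosed_singleton.isOpen_compl).preimage
          (continuous_eval_const _)
      · rw [Metric.dense_iff]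
        rintro ⟨x, hx⟩ ε hε
        obtain ⟨y, hyV, hyd, i, hji, hyne⟩ := dense_update E hEinj x hx hn j hε
        refine ⟨⟨y, hyV⟩, ?_, ?_⟩
        · rw [Metric.mem_ball, Subtype.dist_eq]; exact hyd
        · exact Set.mem_preimage.2 (Set.mem_iUnion.2 ⟨i, Set.mem_iUnion.2 ⟨hji, hyne⟩⟩)
  have hint : (⋂ p : ℕ × ℕ, S p) ∈ residual ↥V :=
    countable_iInter_mem.2 hmem
  refine Filter.mem_of_superset hint ?_
  rintro ⟨x, hx⟩ hu
  refine hAF (mem_A2 E hEinj T hET hx ?_)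
  intro n hn
  refine Set.infinite_of_forall_exists_gt fun j => ?_
  have := Set.mem_iInter.1 hu (n, j + 1)
  simp only [hS, if_neg hn, Set.mem_preimage, Set.mem_iUnion] at this
  obtain ⟨i, hji, hne⟩ := this
  exact ⟨i, hne, by omega⟩

include hEinj hET in
/-- one step of the fusion: refine a cylinder into a smaller one contained in `F`,
freezing one new large row to an eventually-zero value -/
lemma step (F : Set (ℕ →ᵇ ℝ)) (hFσ : IsFσ F) (hAF : A2 T ⊆ F) (m : ℕ)
    (D : Finset ℕ) (c : ℕ → ℕ → ℝ) (l : ℕ) (hg : Good D c l) :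
    ∃ (D' : Finset ℕ) (c' : ℕ → ℕ → ℝ) (l' : ℕ) (n' : ℕ),
      Good D' c' l' ∧ D ⊆ D' ∧ n' ∈ D' ∧ m ≤ n' ∧ l < l' ∧
      Vset E D' c' l' ⊆ Vset E D c l ∧ Vset E D' c' l' ⊆ F := by
  classical
  obtain ⟨C, hC, hFC⟩ := hFσ
  set V := Vset E D c l with hVdef
  haveI : Nonempty ↥V := (Vset_nonempty E hEinj D c l hg.1).to_subtype
  haveI := (isClosed_Vset E D c l).completeSpace_coe
  haveI : BaireSpace ↥V := BaireSpace.of_completelyPseudoMetrizable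
  have hres : Subtype.val ⁻¹' F ∈ residual ↥V := superset_residual E hEinj T hET F hAF
  have hcup : (Subtype.val ⁻¹' F : Set ↥V) = ⋃ j, Subtype.val ⁻¹' (C j) := by
    rw [hFC, Set.preimage_iUnion]
  rw [hcup] at hres
  obtain ⟨j, u, hu⟩ := exists_interior_nonempty (fun j => Subtype.val ⁻¹' (C j))
    (fun j => (hC j).preimage continuous_subtype_val) hres
  obtain ⟨ε, hε, hball⟩ := Metric.isOpen_iff.1 isOpen_interior u hu
  have hball' : Metric.ball u ε ⊆ Subtype.val ⁻¹' (C j) :=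
    hball.trans interior_subset
  obtain ⟨hx₀1, hx₀2, hx₀3, hx₀4⟩ := u.2
  obtain ⟨l', hl', hrl'⟩ := exists_r_lt hε (l + 1)
  set n' := max m (D.sup id + 1) with hn'def
  have hn'D : n' ∉ D := by
    intro h
    have := Finset.le_sup (f := id) h
    simp only [id_eq] at this
    omega
  set c' : ℕ → ℕ → ℝ := fun n i => if n = n' ∧ l' ≤ i then 0 else (u : ℕ →ᵇ ℝ) (E n i)
    with hc'def
  have hc'0 : ∀ n i, n = n' → l' ≤ i → c' n i = 0 := fun n i h1 h2 => if_pos ⟨h1, h2⟩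
  have hc'x : ∀ n i, ¬(n = n' ∧ l' ≤ i) → c' n i = (u : ℕ →ᵇ ℝ) (E n i) :=
    fun n i h => if_neg h
  have hsub : Vset E (insert n' D) c' l' ⊆ V := by
    rintro x ⟨h1, h2, h3, h4⟩
    refine ⟨h1, h2, ?_, ?_⟩
    · intro n hn i
      have hne : n ≠ n' := fun h => hn'D (h ▸ hn)
      rw [h3 n (Finset.mem_insert_of_mem hn) i, hc'x n i (fun h => hne h.1)]
      exact hx₀3 n hn i
    · intro n i hi
      have hil' : i < l' := by omega
      rw [h4 n i hil', hc'x n i (fun h => absurd h.2 (by omega))]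
      exact hx₀4 n i hi
  have hdist : ∀ x ∈ Vset E (insert n' D) c' l', dist x (u : ℕ →ᵇ ℝ) ≤ r l' := by
    rintro x ⟨h1, h2, h3, h4⟩
    rw [BoundedContinuousFunction.dist_le (r_pos l').le]
    intro k
    by_cases hk : ∃ p : ℕ × ℕ, E p.1 p.2 = k
    · obtain ⟨⟨n, i⟩, rfl⟩ := hk
      by_cases hi : i < l'
      · rw [h4 n i hi, hc'x n i (fun h => absurd h.2 (by omega))]
        simp [(r_pos l').le]
      · have hil' : l' ≤ i := by omega
        by_cases hn : n ∈ insert n' D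
        · rw [h3 n hn i]
          by_cases hnn : n = n'
          · rw [hc'0 n i hnn hil']
            exact le_trans (dist_le_of_mem01 (Or.inl rfl) (hx₀1 n i)) (r_anti hil')
          · rw [hc'x n i (fun h => hnn h.1)]
            simp [(r_pos l').le]
        · exact le_trans (dist_le_of_mem01 (h1 n i) (hx₀1 n i)) (r_anti hil')
    · push_neg at hk
      have hk' : ∀ n i, E n i ≠ k := fun n i => hk (n, i)
      rw [h2 k hk', hx₀2 k hk']
      simp [(r_pos l').le]
  refine ⟨insert n' D, c', l', n', ?_, Finset.subset_insert _ _,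
    Finset.mem_insert_self _ _, le_max_left _ _, by omega, hsub, ?_⟩
  · constructor
    · intro n i
      by_cases h : n = n' ∧ l' ≤ i
      · rw [hc'0 n i h.1 h.2]; exact Or.inl rfl
      · rw [hc'x n i h]; exact hx₀1 n i
    · intro n hn i hli
      by_cases hnn : n = n'
      · rw [hc'0 n i hnn hli]
      · have hnD : n ∈ D := (Finset.mem_insert.1 hn).resolve_left hnn
        rw [hc'x n i (fun h => hnn h.1), hx₀3 n hnD i]
        exact hg.2 n hnD i (by omega)
  · intro x hx
    have hxV : x ∈ V := hsub hx
    have hmem : (⟨x, hxV⟩ : ↥V) ∈ Metric.ball u ε := by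
      rw [Metric.mem_ball, Subtype.dist_eq]
      exact lt_of_le_of_lt (hdist x hx) hrl'
    have hxC : x ∈ C j := hball' hmem
    rw [hFC]
    exact Set.mem_iUnion.2 ⟨j, hxC⟩

include hEinj hET hTdisj in
lemma main (F : ℕ → Set (ℕ →ᵇ ℝ)) (hFσ : ∀ m, IsFσ (F m))
    (heq : A2 T = ⋂ m, F m) : False := by
  classical
  have hAF : ∀ m, A2 T ⊆ F m := fun m => heq ▸ Set.iInter_subset F m
  -- the state space of the fusion
  let S := {q : Finset ℕ × (ℕ → ℕ → ℝ) × ℕ // Good q.1 q.2.1 q.2.2}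
  let Vof : S → Set (ℕ →ᵇ ℝ) := fun s => Vset E s.1.1 s.1.2.1 s.1.2.2
  have key : ∀ (m : ℕ) (s : S), ∃ t : S,
      s.1.2.2 < t.1.2.2 ∧ Vof t ⊆ Vof s ∧ Vof t ⊆ F m ∧
      ∃ n' ∈ t.1.1, m ≤ n' := by
    intro m s
    obtain ⟨D', c', l', n', hg', hDsub, hn'D', hmn', hll', hVsub, hVF⟩ :=
      step E hEinj T hET (F m) (hFσ m) (hAF m) m s.1.1 s.1.2.1 s.1.2.2 s.2
    exact ⟨⟨(D', c', l'), hg'⟩, hll', hVsub, hVF, n', hn'D', hmn'⟩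
  choose next hnext using key
  let s0 : S := ⟨(∅, fun _ _ => 0, 0), fun _ _ => Or.inl rfl, fun n hn => absurd hn
    (Finset.notMem_empty n)⟩
  let seq : ℕ → S := fun m => Nat.rec s0 (fun m s => next m s) m
  have hseq : ∀ m, seq (m + 1) = next m (seq m) := fun m => rfl
  have hstep : ∀ m, (seq m).1.2.2 < (seq (m+1)).1.2.2 ∧
      Vof (seq (m+1)) ⊆ Vof (seq m) ∧ Vof (seq (m+1)) ⊆ F m ∧
      ∃ n' ∈ (seq (m+1)).1.1, m ≤ n' := fun m => by
    rw [hseq m]; exact hnext m (seq m)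
  have hchain : ∀ a b, a ≤ b → Vof (seq b) ⊆ Vof (seq a) := by
    intro a b hab
    induction b with
    | zero => simp_all
    | succ b ih =>
      rcases Nat.lt_or_ge a (b+1) with h | h
      · exact ((hstep b).2.1).trans (ih (by omega))
      · have : a = b + 1 := by omega
        subst this; exact subset_rfl
  have hl : ∀ m, m ≤ (seq m).1.2.2 := by
    intro m
    induction m with
    | zero => omega
    | succ m ih => have := (hstep m).1; omega
  let y : ℕ → (ℕ →ᵇ ℝ) := fun m => canon E (seq m).1.2.1 (seq m).2.1
  have hyV : ∀ m, y m ∈ Vof (seq m) := fun m =>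
    canon_mem_Vset E hEinj _ _ _ (seq m).2.1
  have hcauchy : CauchySeq y := by
    refine cauchySeq_of_le_tendsto_0 r (fun a b N ha hb => ?_) r_tendsto
    have hya : y a ∈ Vof (seq N) := hchain N a ha (hyV a)
    have hyb : y b ∈ Vof (seq N) := hchain N b hb (hyV b)
    exact le_trans (dist_le_of_mem_Vset E hya hyb) (r_anti (hl N))
  obtain ⟨x, hx⟩ := cauchySeq_tendsto_of_complete hcauchy
  have hxV : ∀ M, x ∈ Vof (seq M) := by
    intro M
    refine (isClosed_Vset E _ _ _).mem_of_tendsto hx ?_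
    filter_upwards [Filter.eventually_ge_atTop M] with b hb
    exact hchain M b hb (hyV b)
  have hxA2 : x ∈ A2 T := by
    rw [heq]
    exact Set.mem_iInter.2 fun m => (hstep m).2.2.1 (hxV (m+1))
  obtain ⟨m0, hm0⟩ := Set.mem_iUnion.1 hxA2
  obtain ⟨n', hn'D, hmn'⟩ := (hstep m0).2.2.2
  have hrow : {i | x (E n' i) ≠ 0}.Finite := by
    refine (Set.finite_Iio (seq (m0+1)).1.2.2).subset ?_
    intro i hi
    by_contra hge
    simp only [Set.mem_Iio, not_lt] at hge
    exact hi (((hxV (m0+1)).2.2.1 n' hn'D i).trans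
      ((seq (m0+1)).2.2 n' hn'D i hge))
  have hfin := row_finite E T hET hTdisj (hxV (m0+1)) n' hrow
  have := Set.mem_iInter.1 (Set.mem_iInter.1 hm0 n') hmn'
  exact this hfin

end
end A2aux

/-- For a partition `(Tₙ)` of ℕ into pairwise disjoint infinite sets, the set
`A₂ = ⋃ₘ ⋂_{n ≥ m} π_{Tₙ}⁻¹(B₁ⁿ)`, where `B₁ⁿ` is the set of elements of `ℓ∞(Tₙ)`
that are not eventually zero, is not a countable intersection of Fσ subsets of ℓ∞. -/
theorem A₂_not_countable_inter_of_Fσ (T : ℕ → Set ℕ)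
    (hdisj : ∀ i j, i ≠ j → Disjoint (T i) (T j))
    (hinf : ∀ n, (T n).Infinite) (hcover : ⋃ n, T n = Set.univ) :
    ¬ ∃ F : ℕ → Set (ℕ →ᵇ ℝ), (∀ m, IsFσ (F m)) ∧
      (⋃ m : ℕ, ⋂ n ≥ m,
        proj (T n) ⁻¹' {z : ↥(T n) →ᵇ ℝ | ¬ {k : ↥(T n) | z k ≠ 0}.Finite}) =
      ⋂ m, F m := by
  rintro ⟨F, hFσ, heq⟩
  classical
  let E : ℕ → ℕ → ℕ := fun n i => (Set.Infinite.natEmbedding (T n) (hinf n) i : ℕ)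
  have hET : ∀ n i, E n i ∈ T n := fun n i => (Set.Infinite.natEmbedding (T n) (hinf n) i).2
  have hEinj : Function.Injective fun p : ℕ × ℕ => E p.1 p.2 := by
    rintro ⟨n, i⟩ ⟨n', i'⟩ h
    simp only [E] at h
    have hnn : n = n' := by
      by_contra hne
      refine Set.disjoint_left.1 (hdisj n n' hne) (hET n i) ?_
      have := hET n' i'
      simp only [E] at this ⊢
      rw [h]
      exact this
    subst hnn
    have h2 : Set.Infinite.natEmbedding (T n) (hinf n) i = Set.Infinite.natEmbedding (T n) (hinf n) i' := Subtype.ext h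
    have := (Set.Infinite.natEmbedding (T n) (hinf n)).injective h2
    rw [this]
  exact A2aux.main E hEinj T hET hdisj F hFσ heq
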